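/- Let p, q > 0 and let B^{p,q} denote the completion of C^∞(T^2) under the norm ‖f‖_{p,q} = sup_{E ⊂ C_-, E Lagrangian} Σ_{k ∈ Z^2∖{0}} |f_k| |k|^p/(1+|⟨E,k⟩|^{p+q}) + |f_0|. Then for every f ∈ B^{p,q} and every g ∈ C^q(T^2), |m(fg)| ≤ 2 ‖g‖_{C^q} ‖f‖_{p,q}. -/

import Mathlib

/-- The anisotropic norm `‖f‖_{p,q}` on `𝕋²` at the level of Fourier coefficients:
Lagrangian subspaces `E ⊂ C₋` in `ℝ²` are lines spanned by unit vectors `u` with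
`u₁u₂ ≤ 0`, and `⟨E,l⟩ = u·l` (up to sign, with the sup over both signs realized by
the choice of `u`). -/
noncomputable def lineNormPQ (p q : ℝ) (f : (ℤ × ℤ) →₀ ℂ) : ℝ :=
  sSup {r : ℝ | ∃ u : ℝ × ℝ, u.1 ^ 2 + u.2 ^ 2 = 1 ∧ u.1 * u.2 ≤ 0 ∧
      r = ∑ l ∈ f.support.erase 0,
        ‖f l‖ * Real.sqrt ((l.1 : ℝ) ^ 2 + (l.2 : ℝ) ^ 2) ^ p
          / (1 + |u.1 * (l.1 : ℝ) + u.2 * (l.2 : ℝ)| ^ (p + q))}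
    + ‖f 0‖

/-- `|m(fg)| ≤ 2 ‖g‖_{C^q} ‖f‖_{p,q}`: here `f` is a trigonometric polynomial with
coefficients `f_l`, `g` has Fourier coefficients `g_l` with `|g_l| ≤ Cg |l|^{-q}`
for `l ≠ 0` and `|g_0| ≤ Cg` (`Cg = ‖g‖_{C^q}`), and
`m(fg) = ∑_l f_l g_{-l}`. -/
theorem stmt9 (p q : ℝ) (hp : 0 < p) (hq : 0 < q)
    (f : (ℤ × ℤ) →₀ ℂ) (g : ℤ × ℤ → ℂ) (Cg : ℝ)
    (hg0 : ‖g 0‖ ≤ Cg)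
    (hg : ∀ l : ℤ × ℤ, l ≠ 0 →
      ‖g l‖ ≤ Cg * Real.sqrt ((l.1 : ℝ) ^ 2 + (l.2 : ℝ) ^ 2) ^ (-q)) :
    ‖∑ l ∈ f.support, f l * g (-l)‖ ≤ 2 * Cg * lineNormPQ p q f := by
  have hCg : 0 ≤ Cg := le_trans (norm_nonneg _) hg0
  set N : ℤ × ℤ → ℝ := fun l => Real.sqrt ((l.1 : ℝ) ^ 2 + (l.2 : ℝ) ^ 2) with hN
  have hNnn : ∀ l : ℤ × ℤ, 0 ≤ N l := fun l => Real.sqrt_nonneg _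
  have hN1 : ∀ l : ℤ × ℤ, l ≠ 0 → 1 ≤ N l := by
    intro l hl
    have hne : ¬(l.1 = 0 ∧ l.2 = 0) := by
      intro h; exact hl (Prod.ext h.1 h.2)
    have h1 : (1 : ℤ) ≤ l.1 ^ 2 + l.2 ^ 2 := by
      rcases not_and_or.1 hne with h | h
      · nlinarith [Int.one_le_abs h, sq_abs l.1, sq_nonneg l.2]
      · nlinarith [Int.one_le_abs h, sq_abs l.2, sq_nonneg l.1]
    have : (1 : ℝ) ≤ (l.1 : ℝ) ^ 2 + (l.2 : ℝ) ^ 2 := by exact_mod_cast h1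
    exact Real.one_le_sqrt.2 this
  -- denominator with u = (1,0)
  set D : ℤ × ℤ → ℝ := fun l => 1 + |(l.1 : ℝ)| ^ (p + q) with hD
  have hDpos : ∀ l, 0 < D l := by
    intro l
    have : 0 ≤ |(l.1 : ℝ)| ^ (p + q) := Real.rpow_nonneg (abs_nonneg _) _
    simp only [hD]; linarith
  -- key inequality: N^{-q} ≤ 2 * N^p / D for l ≠ 0
  have key : ∀ l : ℤ × ℤ, l ≠ 0 → N l ^ (-q) ≤ 2 * (N l ^ p / D l) := by
    intro l hl
    have h1 := hN1 l hl
    have hNpos : 0 < N l := lt_of_lt_of_le one_pos h1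
    have habs : |(l.1 : ℝ)| ≤ N l := by
      have : |(l.1 : ℝ)| = Real.sqrt ((l.1 : ℝ) ^ 2) := (Real.sqrt_sq_eq_abs _).symm
      rw [this]
      exact Real.sqrt_le_sqrt (by nlinarith [sq_nonneg (l.2 : ℝ)])
    have hA : |(l.1 : ℝ)| ^ (p + q) ≤ N l ^ (p + q) :=
      Real.rpow_le_rpow (abs_nonneg _) habs (by linarith)
    have hNpq : 1 ≤ N l ^ (p + q) :=
      Real.one_le_rpow h1 (by linarith)
    have hDle : D l ≤ 2 * N l ^ (p + q) := by
      simp only [hD]; linarith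
    rw [show 2 * (N l ^ p / D l) = 2 * N l ^ p / D l by ring, le_div_iff₀ (hDpos l)]
    calc N l ^ (-q) * D l ≤ N l ^ (-q) * (2 * N l ^ (p + q)) := by
          apply mul_le_mul_of_nonneg_left hDle (Real.rpow_nonneg (hNnn l) _)
      _ = 2 * (N l ^ (-q) * N l ^ (p + q)) := by ring
      _ = 2 * N l ^ p := by
          rw [← Real.rpow_add hNpos]; ring_nf
  -- the candidate sum over the erased support
  set T : ℝ := ∑ l ∈ f.support.erase 0, ‖f l‖ * N l ^ p / D l with hT
  set S := {r : ℝ | ∃ u : ℝ × ℝ, u.1 ^ 2 + u.2 ^ 2 = 1 ∧ u.1 * u.2 ≤ 0 ∧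
      r = ∑ l ∈ f.support.erase 0,
        ‖f l‖ * Real.sqrt ((l.1 : ℝ) ^ 2 + (l.2 : ℝ) ^ 2) ^ p
          / (1 + |u.1 * (l.1 : ℝ) + u.2 * (l.2 : ℝ)| ^ (p + q))} with hS
  have hTS : T ∈ S := by
    refine ⟨(1, 0), by norm_num, by norm_num, ?_⟩
    simp only [hT, hD, hN]
    apply Finset.sum_congr rfl
    intro l _
    norm_num
  have hbdd : BddAbove S := by
    refine ⟨∑ l ∈ f.support.erase 0, ‖f l‖ * N l ^ p, ?_⟩
    rintro r ⟨u, hu1, hu2, rfl⟩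
    apply Finset.sum_le_sum
    intro l _
    have hd : (1 : ℝ) ≤ 1 + |u.1 * (l.1 : ℝ) + u.2 * (l.2 : ℝ)| ^ (p + q) := by
      have : 0 ≤ |u.1 * (l.1 : ℝ) + u.2 * (l.2 : ℝ)| ^ (p + q) :=
        Real.rpow_nonneg (abs_nonneg _) _
      linarith
    have hnum : 0 ≤ ‖f l‖ * N l ^ p :=
      mul_nonneg (norm_nonneg _) (Real.rpow_nonneg (hNnn l) _)
    calc ‖f l‖ * N l ^ p / (1 + |u.1 * (l.1 : ℝ) + u.2 * (l.2 : ℝ)| ^ (p + q))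
        ≤ ‖f l‖ * N l ^ p / 1 := div_le_div_of_nonneg_left hnum one_pos hd
      _ = ‖f l‖ * N l ^ p := by rw [div_one]
  have hTle : T ≤ sSup S := le_csSup hbdd hTS
  -- main estimate
  have step1 : ‖∑ l ∈ f.support, f l * g (-l)‖ ≤ ∑ l ∈ f.support, ‖f l‖ * ‖g (-l)‖ := by
    refine le_trans (norm_sum_le _ _) ?_
    apply Finset.sum_le_sum
    intro l _
    exact le_of_eq (norm_mul _ _)
  have step2 : ∑ l ∈ f.support, ‖f l‖ * ‖g (-l)‖
      ≤ ‖f 0‖ * ‖g 0‖ + ∑ l ∈ f.support.erase 0, ‖f l‖ * ‖g (-l)‖ := by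
    have hsub : f.support ⊆ insert 0 (f.support.erase 0) := by
      intro l hl
      by_cases h : l = 0
      · simp [h]
      · exact Finset.mem_insert_of_mem (Finset.mem_erase.2 ⟨h, hl⟩)
    calc ∑ l ∈ f.support, ‖f l‖ * ‖g (-l)‖
        ≤ ∑ l ∈ insert 0 (f.support.erase 0), ‖f l‖ * ‖g (-l)‖ :=
          Finset.sum_le_sum_of_subset_of_nonneg hsub
            (fun l _ _ => mul_nonneg (norm_nonneg _) (norm_nonneg _))
      _ = ‖f 0‖ * ‖g 0‖ + ∑ l ∈ f.support.erase 0, ‖f l‖ * ‖g (-l)‖ := by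
          rw [Finset.sum_insert (Finset.notMem_erase _ _)]
          norm_num
  have step3 : ∑ l ∈ f.support.erase 0, ‖f l‖ * ‖g (-l)‖ ≤ 2 * Cg * T := by
    rw [hT, Finset.mul_sum]
    apply Finset.sum_le_sum
    intro l hl
    have hl0 : l ≠ 0 := (Finset.mem_erase.1 hl).1
    have hml0 : -l ≠ 0 := by simpa using hl0
    have hNml : Real.sqrt (((-l).1 : ℝ) ^ 2 + ((-l).2 : ℝ) ^ 2) = N l := by
      simp [hN]
    have hgl : ‖g (-l)‖ ≤ Cg * N l ^ (-q) := by
      have := hg (-l) hml0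
      rwa [hNml] at this
    calc ‖f l‖ * ‖g (-l)‖ ≤ ‖f l‖ * (Cg * N l ^ (-q)) :=
          mul_le_mul_of_nonneg_left hgl (norm_nonneg _)
      _ ≤ ‖f l‖ * (Cg * (2 * (N l ^ p / D l))) := by
          apply mul_le_mul_of_nonneg_left _ (norm_nonneg _)
          exact mul_le_mul_of_nonneg_left (key l hl0) hCg
      _ = 2 * Cg * (‖f l‖ * N l ^ p / D l) := by ring
  have step4 : ‖f 0‖ * ‖g 0‖ ≤ 2 * Cg * ‖f 0‖ := by
    calc ‖f 0‖ * ‖g 0‖ ≤ ‖f 0‖ * Cg := mul_le_mul_of_nonneg_left hg0 (norm_nonneg _)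
      _ ≤ 2 * Cg * ‖f 0‖ := by nlinarith [norm_nonneg (f 0)]
  calc ‖∑ l ∈ f.support, f l * g (-l)‖
      ≤ ‖f 0‖ * ‖g 0‖ + ∑ l ∈ f.support.erase 0, ‖f l‖ * ‖g (-l)‖ := le_trans step1 step2
    _ ≤ 2 * Cg * ‖f 0‖ + 2 * Cg * T := add_le_add step4 step3
    _ ≤ 2 * Cg * ‖f 0‖ + 2 * Cg * sSup S :=
        add_le_add le_rfl (mul_le_mul_of_nonneg_left hTle (by linarith))
    _ = 2 * Cg * lineNormPQ p q f := by rw [lineNormPQ]; ring
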